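/- Let α_n, β_n ∈ (0,1) be sequences with β_n ≤ α_n, β_n bounded away from 1 (say β_n ≤ 1 − c for a constant c > 0), and (α_n − β_n)/β_n → 0 as n → ∞. Then −2·log( 1 − d_H(α_n, β_n)² ) = (√α_n − √β_n)² · ( (√α_n + √β_n)² / (4·β_n·(1−β_n)) + o(1) ) as n → ∞; in particular, 1 − d_H(α_n, β_n)² = 1 − (α_n − β_n)²/(8·β_n·(1−β_n)) + o( (α_n − β_n)²/(β_n(1−β_n)) ). -/

import Mathlib

open Filter Finset Asymptotics
open scoped Classical

noncomputable section

namespace Paper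

/-- Squared Hellinger distance between `Bernoulli x` and `Bernoulli y`. -/
def hellSq (x y : ℝ) : ℝ :=
  ((Real.sqrt x - Real.sqrt y) ^ 2 + (Real.sqrt (1 - x) - Real.sqrt (1 - y)) ^ 2) / 2

/-- Squared minimum Hellinger distance among the latent preference levels. -/
def dHminSq {d : ℕ} (lvl : Fin d → ℝ) : ℝ :=
  sInf {h : ℝ | ∃ i j : Fin d, i ≠ j ∧ h = hellSq (lvl i) (lvl j)}

/-- Graph information quantity `I_s = -2 log(1 - d_H(α,β)^2)`. -/
def Is (α β : ℝ) : ℝ := -2 * Real.log (1 - hellSq α β)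

/-- Observed rating matrices: `none` = unobserved (0), `some true` = +1, `some false` = −1. -/
abbrev RatingMatrix (N M : ℕ) := Fin N → Fin M → Option Bool

/-- Observed graphs on `N` users: an edge indicator on each unordered pair `(i, j)`, `i < j`. -/
abbrev ObsGraph (N : ℕ) := {e : Fin N × Fin N // e.1 < e.2} → Bool

/-- Likelihood of one rating entry. -/
def entryProb (p r : ℝ) : Option Bool → ℝ
  | none => 1 - p
  | some true => p * r
  | some false => p * (1 - r)

/-- Likelihood of an observed rating matrix given the latent preference matrix `R`. -/
def ratingLik {N M : ℕ} (p : ℝ) (R : Fin N → Fin M → ℝ) (Nm : RatingMatrix N M) : ℝ :=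
  ∏ i, ∏ j, entryProb p (R i j) (Nm i j)

/-- Likelihood of an observed graph under the symmetric SBM with cluster assignment `σ`. -/
def graphLik {N : ℕ} {κ : Type} [DecidableEq κ] (α β : ℝ) (σ : Fin N → κ)
    (g : ObsGraph N) : ℝ :=
  ∏ e : {e : Fin N × Fin N // e.1 < e.2},
    if σ e.1.1 = σ e.1.2 then (if g e then α else 1 - α) else (if g e then β else 1 - β)

/-- Joint likelihood of `(N^Ω, G)`. -/
def outcomeProb {N M : ℕ} {κ : Type} [DecidableEq κ] (p α β : ℝ)
    (R : Fin N → Fin M → ℝ) (σ : Fin N → κ) (Nm : RatingMatrix N M) (g : ObsGraph N) : ℝ :=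
  ratingLik p R Nm * graphLik α β σ g

/-- Probability of an event of `(N^Ω, G)` under the model `(R, σ, p, α, β)`. -/
def prEvent {N M : ℕ} {κ : Type} [DecidableEq κ] (p α β : ℝ)
    (R : Fin N → Fin M → ℝ) (σ : Fin N → κ)
    (S : RatingMatrix N M → ObsGraph N → Prop) : ℝ :=
  ∑ Nm : RatingMatrix N M, ∑ g : ObsGraph N, if S Nm g then outcomeProb p α β R σ Nm g else 0

/-- Probability of an event of the graph `G` alone. -/
def grPrEvent {N : ℕ} {κ : Type} [DecidableEq κ] (α β : ℝ) (σ : Fin N → κ)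
    (S : ObsGraph N → Prop) : ℝ :=
  ∑ g : ObsGraph N, if S g then graphLik α β σ g else 0

/-- Probability of an event of the rating matrix `N^Ω` alone. -/
def prRating {N M : ℕ} (p : ℝ) (R : Fin N → Fin M → ℝ)
    (S : RatingMatrix N M → Prop) : ℝ :=
  ∑ Nm : RatingMatrix N M, if S Nm then ratingLik p R Nm else 0

/-- Probability of a joint event of the rating matrix `N^Ω` and `m₀` column indices
sampled uniformly at random from `[M]` with replacement, independently of `N^Ω`. -/
def prRatingSample {N M m₀ : ℕ} (p : ℝ) (R : Fin N → Fin M → ℝ)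
    (S : RatingMatrix N M → (Fin m₀ → Fin M) → Prop) : ℝ :=
  ∑ Nm : RatingMatrix N M, ∑ s : Fin m₀ → Fin M,
    if S Nm s then ratingLik p R Nm * (1 / (M : ℝ)) ^ m₀ else 0

/-- Hamming distance between two vectors. -/
def hamming {M : ℕ} {X : Type*} (u v : Fin M → X) : ℕ :=
  (Finset.univ.filter fun j => u j ≠ v j).card

/-- Bernoulli weight. -/
def bern (q : ℝ) (b : Bool) : ℝ := if b then q else 1 - q

/-- Real-valued indicator of a Boolean. -/
def bInd (b : Bool) : ℝ := if b then 1 else 0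

/-- Adjacency of `i` and `i'` in an observed graph. -/
def adjB {N : ℕ} (g : ObsGraph N) (i i' : Fin N) : Bool :=
  if h : i < i' then g ⟨(i, i'), h⟩ else if h' : i' < i then g ⟨(i', i), h'⟩ else false

/-- `e({i}, A)`: number of edges between user `i` and the user set `A`. -/
def eCount {N : ℕ} (g : ObsGraph N) (i : Fin N) (A : Finset (Fin N)) : ℕ :=
  (A.filter fun i' => adjB g i i' = true).card

/-- The local likelihood-difference statistic `L(i; A, B)`,
where `A = {i | c i = true}` and `B = {i | c i = false}`. -/
def Lstat {N M : ℕ} (α β : ℝ) (uvec vvec : Fin M → ℝ)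
    (Nm : RatingMatrix N M) (g : ObsGraph N) (c : Fin N → Bool) (i : Fin N) : ℝ :=
  Real.log (α * (1 - β) / ((1 - α) * β)) *
      ((eCount g i (Finset.univ.filter fun i' => c i' = false) : ℝ)
        - (eCount g i (Finset.univ.filter fun i' => c i' = true) : ℝ))
    + ∑ j, (if Nm i j = some true then Real.log (vvec j / uvec j) else 0)
    + ∑ j, (if Nm i j = some false then Real.log ((1 - vvec j) / (1 - uvec j)) else 0)

/-- Size of the `k`-th cluster. -/
def clusterSize {n K : ℕ} (C : Fin n → Fin K) (k : Fin K) : ℕ :=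
  (Finset.univ.filter fun i => C i = k).card

/-- Worst-case error probability `P_e^γ(ψ)` for the two equal-sized cluster model
with `2 * n'` users. -/
def worstErr (n' M : ℕ) (p α β : ℝ) {d : ℕ} (lvl : Fin d → ℝ) (γ : ℝ)
    (ψ : RatingMatrix (2 * n') M → ObsGraph (2 * n') → Fin (2 * n') → Fin M → ℝ) : ℝ :=
  sSup {e : ℝ | ∃ (σ : Fin (2 * n') → Bool) (u v : Fin M → Fin d),
    (Finset.univ.filter fun i => σ i = true).card = n' ∧
    hamming (fun j => lvl (u j)) (fun j => lvl (v j)) = ⌈γ * (M : ℝ)⌉₊ ∧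
    e = prEvent p α β (fun i j => lvl (if σ i then u j else v j)) σ
      (fun Nm g => ψ Nm g ≠ fun i j => lvl (if σ i then u j else v j))}

end Paper

open Paper

-- Auxiliary lemmas for statement19



lemma hellSq_self (x : ℝ) : hellSq x x = 0 := by simp [hellSq]

lemma hellSq_eq (x y : ℝ) (hx : 0 ≤ x) (hx1 : x ≤ 1) (hy : 0 ≤ y) (hy1 : y ≤ 1) :
    hellSq x y = 1 - Real.sqrt (x * y) - Real.sqrt ((1 - x) * (1 - y)) := by
  unfold hellSq
  rw [Real.sqrt_mul hx, Real.sqrt_mul (by linarith : (0:ℝ) ≤ 1 - x)]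
  have e1 : Real.sqrt x ^ 2 = x := Real.sq_sqrt hx
  have e2 : Real.sqrt y ^ 2 = y := Real.sq_sqrt hy
  have e3 : Real.sqrt (1 - x) ^ 2 = 1 - x := Real.sq_sqrt (by linarith)
  have e4 : Real.sqrt (1 - y) ^ 2 = 1 - y := Real.sq_sqrt (by linarith)
  linear_combination (e1 + e2 + e3 + e4) / 2

lemma le_sqrt_of_sq_le {a y : ℝ} (ha : 0 ≤ a) (h : a ^ 2 ≤ y) : a ≤ Real.sqrt y := by
  calc a = Real.sqrt (a ^ 2) := (Real.sqrt_sq ha).symm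
    _ ≤ Real.sqrt y := Real.sqrt_le_sqrt h

lemma sqrt_le_of_le_sq {b y : ℝ} (hb : 0 ≤ b) (h : y ≤ b ^ 2) : Real.sqrt y ≤ b := by
  calc Real.sqrt y ≤ Real.sqrt (b ^ 2) := Real.sqrt_le_sqrt h
    _ = b := Real.sqrt_sq hb

lemma sqrt_one_add_bounds (x : ℝ) (h0 : 0 ≤ x) (h1 : x ≤ 1) :
    1 + x/2 - x^2/8 ≤ Real.sqrt (1 + x) ∧
    Real.sqrt (1 + x) ≤ 1 + x/2 - x^2/8 + x^3/16 := by
  have h4 : x^4 ≤ x^3 := by nlinarith [pow_nonneg h0 3]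
  constructor
  · exact le_sqrt_of_sq_le (by nlinarith) (by nlinarith)
  · have h5 : x^5 ≤ x^4 := by nlinarith [pow_nonneg h0 4]
    exact sqrt_le_of_le_sq (by nlinarith) (by nlinarith [pow_nonneg h0 6])

lemma sqrt_one_sub_bounds (x : ℝ) (h0 : 0 ≤ x) (h1 : x ≤ 1/2) :
    1 - x/2 - x^2/8 - x^3/2 ≤ Real.sqrt (1 - x) ∧
    Real.sqrt (1 - x) ≤ 1 - x/2 - x^2/8 := by
  have hx3 : 0 ≤ x^3 := pow_nonneg h0 3
  have h4 : x^4 ≤ x^3 * (1/2) := by nlinarith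
  have h5 : x^5 ≤ x^3 * (1/4) := by nlinarith [pow_nonneg h0 4, sq_nonneg x]
  have h6 : x^6 ≤ x^3 * (1/8) := by nlinarith [pow_nonneg h0 5, pow_nonneg h0 4]
  constructor
  · exact le_sqrt_of_sq_le (by nlinarith) (by nlinarith)
  · exact sqrt_le_of_le_sq (by nlinarith) (by nlinarith)

lemma neg_log_bounds (x : ℝ) (h0 : 0 ≤ x) (h1 : x ≤ 1/2) :
    x ≤ -Real.log (1 - x) ∧ -Real.log (1 - x) ≤ x + 2 * x^2 := by
  have hpos : (0:ℝ) < 1 - x := by linarith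
  constructor
  · have := Real.log_le_sub_one_of_pos hpos
    linarith
  · have h2 : Real.exp (-(x + 2*x^2)) ≤ 1 - x := by
      have he : (x + 2*x^2) + 1 ≤ Real.exp (x + 2*x^2) := Real.add_one_le_exp _
      have hepos : (0:ℝ) < Real.exp (x + 2*x^2) := Real.exp_pos _
      rw [Real.exp_neg, inv_le_comm₀ hepos hpos]
      calc (1 - x)⁻¹ ≤ 1 + (x + 2*x^2) := by
            rw [inv_le_iff_one_le_mul₀ hpos]; nlinarith
        _ ≤ Real.exp (x + 2*x^2) := by linarith
    have := Real.le_log_iff_exp_le hpos |>.mpr h2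
    linarith



lemma hellSq_nonneg (x y : ℝ) : 0 ≤ hellSq x y := by unfold hellSq; positivity

lemma main_est (a b t d : ℝ) (hb0 : 0 < b) (hb1 : b < 1) (hba : b ≤ a) (ha1 : a < 1)
    (htd1 : b * t = a - b) (htd2 : (1 - b) * d = a - b)
    (ht : t ≤ 1/2) (hd : d ≤ 1/2) :
    |hellSq a b - t * d / 8| ≤ (t + d) * (t * d) := by
  have ht0 : 0 ≤ t := by nlinarith
  have hd0 : 0 ≤ d := by nlinarith
  have ha0 : 0 ≤ a := by linarith
  have e1 : Real.sqrt (a * b) = b * Real.sqrt (1 + t) := by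
    have hab : a * b = b ^ 2 * (1 + t) := by linear_combination (-b) * htd1
    rw [hab, Real.sqrt_mul (sq_nonneg b), Real.sqrt_sq hb0.le]
  have e2 : Real.sqrt ((1 - a) * (1 - b)) = (1 - b) * Real.sqrt (1 - d) := by
    have hab : (1 - a) * (1 - b) = (1 - b) ^ 2 * (1 - d) := by
      linear_combination (1 - b) * htd2
    rw [hab, Real.sqrt_mul (sq_nonneg (1 - b)), Real.sqrt_sq (by linarith)]
  have hrw : hellSq a b = 1 - b * Real.sqrt (1 + t) - (1 - b) * Real.sqrt (1 - d) := by
    rw [hellSq_eq a b ha0 ha1.le hb0.le hb1.le, e1, e2]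
  obtain ⟨hs1L, hs1U⟩ := sqrt_one_add_bounds t ht0 (by linarith)
  obtain ⟨hs2L, hs2U⟩ := sqrt_one_sub_bounds d hd0 hd
  have p1 : b * (1 + t/2 - t^2/8) ≤ b * Real.sqrt (1 + t) :=
    mul_le_mul_of_nonneg_left hs1L hb0.le
  have p2 : b * Real.sqrt (1 + t) ≤ b * (1 + t/2 - t^2/8 + t^3/16) :=
    mul_le_mul_of_nonneg_left hs1U hb0.le
  have p3 : (1 - b) * (1 - d/2 - d^2/8 - d^3/2) ≤ (1 - b) * Real.sqrt (1 - d) :=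
    mul_le_mul_of_nonneg_left hs2L (by linarith)
  have p4 : (1 - b) * Real.sqrt (1 - d) ≤ (1 - b) * (1 - d/2 - d^2/8) :=
    mul_le_mul_of_nonneg_left hs2U (by linarith)
  have q1 : b * t^2 = (1 - b) * (d * t) := by linear_combination t * htd1 - t * htd2
  have q2 : (1 - b) * d^2 = b * (t * d) := by linear_combination d * htd2 - d * htd1
  have q3 : (1 - b) * d^3 = b * (t * d^2) := by
    linear_combination d^2 * htd2 - d^2 * htd1
  have q5 : b * t^3 = (1 - b) * (t^2 * d) := by
    linear_combination t^2 * htd1 - t^2 * htd2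
  have n1 : 0 ≤ t * d^2 := by positivity
  have n2 : 0 ≤ t^2 * d := by positivity
  have n3 : b * (t * d^2) ≤ t * d^2 := by nlinarith
  have n4 : (1 - b) * (t^2 * d) ≤ t^2 * d := by nlinarith
  have U1 : hellSq a b ≤ 1 - b*(1 + t/2 - t^2/8) - (1-b)*(1 - d/2 - d^2/8 - d^3/2) := by
    rw [hrw]; linarith [p1, p3]
  have L1 : 1 - b*(1 + t/2 - t^2/8 + t^3/16) - (1-b)*(1 - d/2 - d^2/8) ≤ hellSq a b := by
    rw [hrw]; linarith [p2, p4]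
  rw [abs_le]
  constructor
  · linarith [L1, htd1, htd2, q1, q2, q5, n4, n1, n2]
  · linarith [U1, htd1, htd2, q1, q2, q3, n3, n1, n2]




lemma divhelp (T Q s2 D : ℝ) (hs : s2 ≠ 0) : T/s2 - Q/D = (T - s2*(Q/D))/s2 := by
  rcases eq_or_ne D 0 with rfl|hD
  · simp
  · field_simp

lemma ratio_facts (a b c : ℝ) (hc : 0 < c) (hb0 : 0 < b) (hb1 : b < 1) (ha1 : a < 1)
    (hblt : b < a) (hcb : c ≤ 1 - b)
    (htH : (a-b)/b ≤ 1/2) (htc2 : (a-b)/b ≤ c/2) :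
    |hellSq a b - ((a-b)/b) * ((a-b)/(1-b)) / 8|
        ≤ ((a-b)/b + (a-b)/(1-b)) * (((a-b)/b) * ((a-b)/(1-b))) ∧
      (a-b)/(1-b) ≤ (1/c) * ((a-b)/b) ∧ (a-b)/(1-b) ≤ 1/2 := by
  have hab : 0 < a - b := by linarith
  have hb1' : (0:ℝ) < 1 - b := by linarith
  have htd1 : b * ((a-b)/b) = a - b := by field_simp
  have htd2 : (1 - b) * ((a-b)/(1-b)) = a - b := by field_simp
  have ht'0 : 0 ≤ (a-b)/b := by positivity
  have hd'0 : 0 ≤ (a-b)/(1-b) := by positivity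
  have hd'c : ((a-b)/(1-b)) * c ≤ (a-b)/b := by
    have h1 : ((a-b)/(1-b)) * c ≤ ((a-b)/(1-b)) * (1 - b) :=
      mul_le_mul_of_nonneg_left hcb hd'0
    have h2 : ((a-b)/(1-b)) * (1 - b) = a - b := by field_simp
    have h3 : b * ((a-b)/b) ≤ 1 * ((a-b)/b) := mul_le_mul_of_nonneg_right hb1.le ht'0
    linarith
  have hd'le : (a-b)/(1-b) ≤ (1/c) * ((a-b)/b) := by
    have h4 := mul_le_mul_of_nonneg_left hd'c (by positivity : (0:ℝ) ≤ 1/c)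
    have h5 : (1/c)*(((a-b)/(1-b))*c) = (a-b)/(1-b) := by field_simp
    linarith
  have hdH : (a-b)/(1-b) ≤ 1/2 := by
    have h6 : ((a-b)/(1-b)) * c ≤ (1/2) * c := by linarith
    exact le_of_mul_le_mul_right h6 hc
  exact ⟨main_est a b _ _ hb0 hb1 hblt.le ha1 htd1 htd2 htH hdH, hd'le, hdH⟩

lemma estB (a b c : ℝ) (hc : 0 < c) (hb0 : 0 < b) (hb1 : b < 1) (ha1 : a < 1)
    (hblt : b < a) (hcb : c ≤ 1 - b)
    (htH : (a-b)/b ≤ 1/2) (htc2 : (a-b)/b ≤ c/2) :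
    |((1 - hellSq a b) - (1 - (a-b)^2/(8*b*(1-b)))) / ((a-b)^2/(b*(1-b)))|
      ≤ (1 + 1/c) * ((a-b)/b) := by
  obtain ⟨hmain, hd'le, hdH⟩ := ratio_facts a b c hc hb0 hb1 ha1 hblt hcb htH htc2
  have hab : 0 < a - b := by linarith
  have hb1' : (0:ℝ) < 1 - b := by linarith
  set t' := (a - b)/b with ht'def
  set d' := (a - b)/(1 - b) with hd'def
  have ht'0 : 0 < t' := by positivity
  have hd'0 : 0 < d' := by positivity
  have hXeq : (a - b)^2/(b*(1-b)) = t' * d' := by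
    rw [ht'def, hd'def]; field_simp
  have hMeq : (a - b)^2/(8*b*(1-b)) = t' * d' / 8 := by
    rw [ht'def, hd'def]; field_simp
  have hX0 : 0 < t' * d' := by positivity
  rw [hMeq, hXeq]
  have hrw : (1 - hellSq a b - (1 - t'*d'/8)) = -(hellSq a b - t'*d'/8) := by ring
  rw [hrw, abs_div, abs_neg, abs_of_pos hX0, div_le_iff₀ hX0]
  calc |hellSq a b - t'*d'/8| ≤ (t' + d') * (t'*d') := hmain
    _ ≤ ((1 + 1/c) * t') * (t'*d') := by
        apply mul_le_mul_of_nonneg_right _ hX0.le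
        have h7 : (1/c) * t' - d' = (1/c)*t' - d' := rfl
        linarith [hd'le]
    _ = (1 + 1/c) * ((a-b)/b) * (t'*d') := by rw [← ht'def]

set_option maxHeartbeats 1000000 in
lemma estA (a b c : ℝ) (hc : 0 < c) (hb0 : 0 < b) (hb1 : b < 1) (ha0 : 0 < a) (ha1 : a < 1)
    (hblt : b < a) (hcb : c ≤ 1 - b)
    (htH : (a-b)/b ≤ 1/2) (htc2 : (a-b)/b ≤ c/2) (htcc : (a-b)/b ≤ c^2) :
    |(-2 * Real.log (1 - hellSq a b)) / (Real.sqrt a - Real.sqrt b)^2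
       - (Real.sqrt a + Real.sqrt b)^2/(4*b*(1-b))|
      ≤ (80 + 10*(1+1/c)*(1/c)) * ((a-b)/b) := by
  obtain ⟨hmain, hd'le, hdH⟩ := ratio_facts a b c hc hb0 hb1 ha1 hblt hcb htH htc2
  have hab : 0 < a - b := by linarith
  have hb1' : (0:ℝ) < 1 - b := by linarith
  set K : ℝ := 80 + 10 * (1 + 1/c) * (1/c) with hK
  set t' := (a - b)/b with ht'def
  set d' := (a - b)/(1 - b) with hd'def
  have ht'0 : 0 ≤ t' := by positivity
  have hd'0 : 0 ≤ d' := by positivity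
  have htd1 : b * t' = a - b := by rw [ht'def]; field_simp
  set h := hellSq a b with hhdef
  have hh0 : 0 ≤ h := hellSq_nonneg a b
  have hmm := abs_le.mp hmain
  have htd4 : t' * d' ≤ 1/4 := by
    have := mul_le_mul htH hdH hd'0 (by norm_num : (0:ℝ) ≤ 1/2)
    linarith
  have hXnn : 0 ≤ t' * d' := mul_nonneg ht'0 hd'0
  have hh2 : h ≤ 2 * (t' * d') := by
    have h12 : (t' + d') * (t' * d') ≤ 1 * (t' * d') :=
      mul_le_mul_of_nonneg_right (by linarith) hXnn
    linarith [hmm.2]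
  have hhH : h ≤ 1/2 := by linarith
  obtain ⟨hlog1, hlog2⟩ := neg_log_bounds h hh0 hhH
  set L := -Real.log (1 - h) with hLdef
  set sa := Real.sqrt a with hsadef
  set sb := Real.sqrt b with hsbdef
  have hsa2 : sa^2 = a := Real.sq_sqrt ha0.le
  have hsb2 : sb^2 = b := Real.sq_sqrt hb0.le
  have hsalt : sb < sa := Real.sqrt_lt_sqrt hb0.le hblt
  have hsb0 : 0 ≤ sb := Real.sqrt_nonneg _
  have hs2pos : 0 < (sa - sb)^2 := pow_pos (sub_pos.mpr hsalt) 2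
  have hdiff : (sa - sb) * (sa + sb) = a - b := by linear_combination hsa2 - hsb2
  have hq : (sa - sb)^2 * (sa + sb)^2 = (a - b)^2 := by
    rw [← mul_pow, hdiff]
  have hqb : (sa + sb)^2 ≤ 5 * b := by
    have h13 : b * t' ≤ b * (1/2) := mul_le_mul_of_nonneg_left htH hb0.le
    linarith [sq_nonneg (sa - sb), hsa2, hsb2, htd1]
  have hEn : (-2 * Real.log (1 - h)) / (sa - sb)^2 - (sa + sb)^2/(4 * b * (1 - b))
      = (2*L - (a - b)^2/(4*b*(1-b)))/(sa - sb)^2 := by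
    have hs2ne : (sa - sb)^2 ≠ 0 := hs2pos.ne'
    have h2 : (sa-sb)^2 * ((sa+sb)^2/(4*b*(1-b))) = (a-b)^2/(4*b*(1-b)) := by
      rw [← mul_div_assoc, hq]
    have hT : (-2 : ℝ) * Real.log (1 - h) = 2*L := by rw [hLdef]; ring
    rw [hT, divhelp (2*L) ((sa+sb)^2) _ (4*b*(1-b)) hs2ne, h2]
  have hMeq4 : (a - b)^2/(4*b*(1-b)) = t' * d' / 4 := by
    rw [ht'def, hd'def]; field_simp
  have hnum : |2*L - (a - b)^2/(4*b*(1-b))| ≤ 4*h^2 + 2*((t'+d')*(t'*d')) := by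
    rw [hMeq4, abs_le]
    constructor
    · linarith [hmm.1, hlog1, sq_nonneg h]
    · linarith [hmm.2, hlog2]
  have hC0 : (0:ℝ) ≤ 1/c := by positivity
  have f2 : (1/c)^2 * t' ≤ 1 := by
    have h6 : (1/c)^2 * t' ≤ (1/c)^2 * c^2 := mul_le_mul_of_nonneg_left htcc (sq_nonneg _)
    have h7 : (1/c)^2 * c^2 = 1 := by field_simp
    linarith
  have f1 : d' ≤ (1/c) * (b * t') := by
    have e2 : (1 - b) * d' = a - b := by rw [hd'def]; field_simp
    have h8 : c * d' ≤ (1 - b) * d' := mul_le_mul_of_nonneg_right hcb hd'0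
    have h9 := mul_le_mul_of_nonneg_left (h8.trans_eq (e2.trans htd1.symm))
      (by positivity : (0:ℝ) ≤ 1/c)
    have h10 : (1/c) * (c * d') = d' := by field_simp
    linarith
  have f1' : d' ≤ (1/c) * t' := hd'le
  have g1 : h ≤ 2*(1/c)*b*t'^2 := by
    have h14 : t' * d' ≤ t' * ((1/c) * (b * t')) := mul_le_mul_of_nonneg_left f1 ht'0
    have h15 : t' * ((1/c) * (b * t')) = (1/c)*b*t'^2 := by ring
    linarith [hh2]
  have g1b : h^2 ≤ 4*(1/c)^2*b^2*t'^4 := by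
    have h16 := mul_self_le_mul_self hh0 g1
    have h17 : (2*(1/c)*b*t'^2) * (2*(1/c)*b*t'^2) = 4*(1/c)^2*b^2*t'^4 := by ring
    have h18 : h * h = h^2 := by ring
    linarith
  have g1c : (1/c)^2 * b * t' ≤ 1 := by
    have h19 : 0 ≤ (1/c)^2 * t' := by positivity
    have h20 : b * ((1/c)^2 * t') ≤ 1 * ((1/c)^2 * t') :=
      mul_le_mul_of_nonneg_right hb1.le h19
    have h21 : b * ((1/c)^2 * t') = (1/c)^2 * b * t' := by ring
    linarith
  have g2 : 20*b*h^2 ≤ 80*(b^2*t'^3) := by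
    have g2a : 20*b*h^2 ≤ 20*b*(4*(1/c)^2*b^2*t'^4) :=
      mul_le_mul_of_nonneg_left g1b (by positivity)
    have g2b : 20*b*(4*(1/c)^2*b^2*t'^4) = 80*(b^2*t'^3)*((1/c)^2*b*t') := by ring
    have g2c : 80*(b^2*t'^3)*((1/c)^2*b*t') ≤ 80*(b^2*t'^3)*1 :=
      mul_le_mul_of_nonneg_left g1c (by positivity)
    linarith
  have g3 : 10*b*((t'+d')*(t'*d')) ≤ 10*(1+1/c)*(1/c)*(b^2*t'^3) := by
    have A : t' + d' ≤ (1 + 1/c)*t' := by linarith [f1']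
    have B : t' * d' ≤ t'*((1/c)*(b*t')) := mul_le_mul_of_nonneg_left f1 ht'0
    have hprod : (t'+d')*(t'*d') ≤ ((1+1/c)*t')*(t'*((1/c)*(b*t'))) :=
      mul_le_mul A B (mul_nonneg ht'0 hd'0) (by positivity)
    have h11 := mul_le_mul_of_nonneg_left hprod (by positivity : (0:ℝ) ≤ 10*b)
    have h22 : 10*b*(((1+1/c)*t')*(t'*((1/c)*(b*t')))) = 10*(1+1/c)*(1/c)*(b^2*t'^3) := by
      ring
    linarith
  have habsq : (a - b)^2 = b^2*t'^2 := by rw [← htd1]; ring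
  have hs5 : (a - b)^2 ≤ (sa - sb)^2 * (5*b) := by
    have h23 := mul_le_mul_of_nonneg_left hqb hs2pos.le
    linarith [hq]
  have hKt : (0:ℝ) ≤ K * t' := by positivity
  have hfin : 4*h^2 + 2*((t'+d')*(t'*d')) ≤ (K*t') * (sa-sb)^2 := by
    have h5b : (0:ℝ) < 5*b := by linarith
    have c2 : (K*t') * (a-b)^2 = K * (b^2*t'^3) := by rw [habsq]; ring
    have c3 : (K*t') * (a-b)^2 ≤ (K*t') * ((sa-sb)^2*(5*b)) :=
      mul_le_mul_of_nonneg_left hs5 hKt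
    have c4 : 20*b*h^2 + 10*b*((t'+d')*(t'*d')) ≤ K * (b^2*t'^3) := by
      rw [hK]; linarith [g2, g3]
    have c5 : (4*h^2 + 2*((t'+d')*(t'*d'))) * (5*b) ≤ ((K*t') * (sa-sb)^2) * (5*b) := by
      have c1 : (4*h^2 + 2*((t'+d')*(t'*d'))) * (5*b)
          = 20*b*h^2 + 10*b*((t'+d')*(t'*d')) := by ring
      have c6 : (K*t') * ((sa-sb)^2*(5*b)) = ((K*t') * (sa-sb)^2) * (5*b) := by ring
      linarith
    exact le_of_mul_le_mul_right c5 h5b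
  rw [hEn, abs_div, abs_of_pos hs2pos, div_le_iff₀ hs2pos]
  calc |2*L - (a - b)^2/(4*b*(1-b))| ≤ 4*h^2 + 2*((t'+d')*(t'*d')) := hnum
    _ ≤ (K*t') * (sa-sb)^2 := hfin
    _ = K * ((a-b)/b) * (sa-sb)^2 := by rw [← ht'def]


set_option maxHeartbeats 1000000 in
/-- Remark on `I_s`: if `β_n ≤ α_n`, `β_n ≤ 1 − c`, and
`(α_n − β_n)/β_n → 0`, then
`−2·log(1 − d_H(α_n, β_n)²) = (√α_n − √β_n)²·((√α_n + √β_n)²/(4β_n(1−β_n)) + o(1))`;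
in particular,
`1 − d_H(α_n, β_n)² = 1 − (α_n − β_n)²/(8β_n(1−β_n)) + o((α_n − β_n)²/(β_n(1−β_n)))`. -/
theorem statement19
    (α β : ℕ → ℝ)
    (hα : ∀ n, α n ∈ Set.Ioo (0 : ℝ) 1) (hβ : ∀ n, β n ∈ Set.Ioo (0 : ℝ) 1)
    (hβα : ∀ n, β n ≤ α n)
    (c : ℝ) (hc : 0 < c) (hβc : ∀ n, β n ≤ 1 - c)
    (hratio : Tendsto (fun n => (α n - β n) / β n) atTop (nhds 0)) :
    (∃ e : ℕ → ℝ, Tendsto e atTop (nhds 0) ∧ ∀ n,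
      -2 * Real.log (1 - hellSq (α n) (β n)) =
        (Real.sqrt (α n) - Real.sqrt (β n)) ^ 2 *
          ((Real.sqrt (α n) + Real.sqrt (β n)) ^ 2 / (4 * β n * (1 - β n)) + e n))
    ∧
    (∃ e' : ℕ → ℝ, Tendsto e' atTop (nhds 0) ∧ ∀ n,
      1 - hellSq (α n) (β n) =
        1 - (α n - β n) ^ 2 / (8 * β n * (1 - β n))
          + e' n * ((α n - β n) ^ 2 / (β n * (1 - β n)))) := by
  classical
  have hev : ∀ᶠ n in atTop, (α n - β n) / β n ≤ min (min (1/2) (c/2)) (c^2) := by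
    have hpos : (0:ℝ) < min (min (1/2) (c/2)) (c^2) := by positivity
    exact hratio.eventually (eventually_le_nhds hpos)
  constructor
  · refine ⟨fun n => if α n = β n then 0 else
      (-2 * Real.log (1 - hellSq (α n) (β n))) / (Real.sqrt (α n) - Real.sqrt (β n))^2
        - (Real.sqrt (α n) + Real.sqrt (β n))^2 / (4 * β n * (1 - β n)), ?_, ?_⟩
    · apply squeeze_zero_norm' (a := fun n => (80 + 10*(1+1/c)*(1/c)) * ((α n - β n) / β n))
      · filter_upwards [hev] with n hn
        by_cases hne : α n = β n
        · simp [hne]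
        · have hblt : β n < α n := lt_of_le_of_ne (hβα n) (Ne.symm hne)
          have hcb : c ≤ 1 - β n := by linarith [hβc n]
          have htH : (α n - β n)/β n ≤ 1/2 :=
            hn.trans ((min_le_left _ _).trans (min_le_left _ _))
          have htc2 : (α n - β n)/β n ≤ c/2 :=
            hn.trans ((min_le_left _ _).trans (min_le_right _ _))
          have htcc : (α n - β n)/β n ≤ c^2 := hn.trans (min_le_right _ _)
          have := estA (α n) (β n) c hc (hβ n).1 (hβ n).2 (hα n).1 (hα n).2
            hblt hcb htH htc2 htcc
          simp only [if_neg hne, Real.norm_eq_abs]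
          exact this
      · simpa using hratio.const_mul (80 + 10*(1+1/c)*(1/c))
    · intro n
      by_cases hne : α n = β n
      · simp only [if_pos hne, hne, hellSq_self, sub_zero, Real.log_one, mul_zero,
          add_zero, sub_self, ne_eq]
        ring
      · simp only [if_neg hne]
        have hb0 : 0 < β n := (hβ n).1
        have hb1' : (0:ℝ) < 1 - β n := by linarith [(hβ n).2]
        have hblt : β n < α n := lt_of_le_of_ne (hβα n) (Ne.symm hne)
        have hsalt : Real.sqrt (β n) < Real.sqrt (α n) := Real.sqrt_lt_sqrt hb0.le hblt
        have hs2 : (Real.sqrt (α n) - Real.sqrt (β n))^2 ≠ 0 :=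
          (pow_pos (sub_pos.mpr hsalt) 2).ne'
        rw [show ∀ Q X : ℝ, Q + (X - Q) = X from fun Q X => by ring, ← mul_div_assoc,
          mul_div_cancel_left₀ _ hs2]
  · refine ⟨fun n => if α n = β n then 0 else
      ((1 - hellSq (α n) (β n)) - (1 - (α n - β n)^2 / (8 * β n * (1 - β n)))) /
        ((α n - β n)^2 / (β n * (1 - β n))), ?_, ?_⟩
    · apply squeeze_zero_norm' (a := fun n => (1 + 1/c) * ((α n - β n) / β n))
      · filter_upwards [hev] with n hn
        by_cases hne : α n = β n
        · simp [hne]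
        · have hblt : β n < α n := lt_of_le_of_ne (hβα n) (Ne.symm hne)
          have hcb : c ≤ 1 - β n := by linarith [hβc n]
          have htH : (α n - β n)/β n ≤ 1/2 :=
            hn.trans ((min_le_left _ _).trans (min_le_left _ _))
          have htc2 : (α n - β n)/β n ≤ c/2 :=
            hn.trans ((min_le_left _ _).trans (min_le_right _ _))
          have := estB (α n) (β n) c hc (hβ n).1 (hβ n).2 (hα n).2 hblt hcb htH htc2
          simp only [if_neg hne, Real.norm_eq_abs]
          exact this
      · simpa using hratio.const_mul (1 + 1/c)
    · intro n
      by_cases hne : α n = β n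
      · simp [if_pos hne, hne, hellSq_self]
      · simp only [if_neg hne]
        have hb0 : 0 < β n := (hβ n).1
        have hb1' : (0:ℝ) < 1 - β n := by linarith [(hβ n).2]
        have hblt : β n < α n := lt_of_le_of_ne (hβα n) (Ne.symm hne)
        have hab : (α n - β n) ≠ 0 := sub_ne_zero.mpr hne
        field_simp
        ring
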